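/- Let A be an m × n complex matrix of rank a whose first a rows are linearly independent and whose remaining rows satisfy A_{i→} = Σ_{l=1}^{a} α_{i,l} A_{l→} for i = a+1, …, m, and let B be a p × q complex matrix of rank b whose first b columns are linearly independent and whose remaining columns satisfy B_{↓j} = Σ_{k=1}^{b} β_{k,j} B_{↓k} for j = b+1, …, q. Let C be an m × q complex matrix. Then A A⁽¹⁾ C B⁽¹⁾ B = C holds for every choice of {1}-inverses A⁽¹⁾ of A and B⁽¹⁾ of B if and only if the entries of C satisfy: C_{i,j} = Σ_{l=1}^{a} α_{i,l} C_{l,j} for all i > a and all j, and C_{i,j} = Σ_{k=1}^{b} β_{k,j} C_{i,k} for all j > b and all i (with the entries C_{i,j} for i ≤ a and j ≤ b arbitrary). -/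

import Mathlib

open Finset Matrix in
/-- Every complex matrix has a `{1}`-inverse. -/
lemma exists_one_inverse {m n : ℕ} (A : Matrix (Fin m) (Fin n) ℂ) :
    ∃ A1 : Matrix (Fin n) (Fin m) ℂ, A * A1 * A = A := by
  set f := Matrix.toLin' A with hfdef
  obtain ⟨Q, hQ⟩ := Submodule.exists_isCompl (LinearMap.range f)
  set π := Submodule.linearProjOfIsCompl _ _ hQ with hπ
  obtain ⟨s, hs⟩ := f.rangeRestrict.exists_rightInverse_of_surjective f.range_rangeRestrict
  set g : (Fin m → ℂ) →ₗ[ℂ] (Fin n → ℂ) := s ∘ₗ π with hg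
  refine ⟨LinearMap.toMatrix' g, ?_⟩
  apply Matrix.toLin'.injective
  rw [Matrix.toLin'_mul, Matrix.toLin'_mul, Matrix.toLin'_toMatrix']
  apply LinearMap.ext; intro x; funext i
  simp only [LinearMap.comp_apply, ← hfdef, hg]
  have h1 : π (f x) = ⟨f x, LinearMap.mem_range_self f x⟩ :=
    Submodule.linearProjOfIsCompl_apply_left hQ ⟨f x, LinearMap.mem_range_self f x⟩
  rw [h1]
  have h2 : f (s ⟨f x, LinearMap.mem_range_self f x⟩)
      = ((f.rangeRestrict ∘ₗ s) ⟨f x, LinearMap.mem_range_self f x⟩ : Fin m → ℂ) := rfl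
  rw [h2, hs]
  rfl

open Finset Matrix in
/-- If `A` has rank `a` and its rows satisfy the dependence relations `α`, then any
vector satisfying the same relations lies in the column space of `A`. -/
lemma mem_range_of_relations {m n a : ℕ} (ha : a ≤ m) (A : Matrix (Fin m) (Fin n) ℂ)
    (hrank : A.rank = a) (α : Fin m → Fin a → ℂ)
    (hα : ∀ i : Fin m, a ≤ (i : ℕ) → A i = ∑ l : Fin a, α i l • A (Fin.castLE ha l))
    (v : Fin m → ℂ)
    (hv : ∀ i : Fin m, a ≤ (i : ℕ) → v i = ∑ l : Fin a, α i l * v (Fin.castLE ha l)) :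
    ∃ x : Fin n → ℂ, A.mulVec x = v := by
  classical
  let S : Submodule ℂ (Fin m → ℂ) :=
    { carrier := {w | ∀ i : Fin m, a ≤ (i : ℕ) → w i = ∑ l : Fin a, α i l * w (Fin.castLE ha l)}
      add_mem' := by
        intro u w hu hw i hi
        simp only [Pi.add_apply, hu i hi, hw i hi, mul_add, Finset.sum_add_distrib]
      zero_mem' := by
        intro i hi
        simp
      smul_mem' := by
        intro c u hu i hi
        simp only [Pi.smul_apply, smul_eq_mul, hu i hi, Finset.mul_sum, mul_left_comm] }
  have hle : LinearMap.range A.mulVecLin ≤ S := by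
    rintro _ ⟨x, rfl⟩ i hi
    have hrow : ∀ k, A i k = ∑ l : Fin a, α i l * A (Fin.castLE ha l) k := by
      intro k
      have := congrFun (hα i hi) k
      simpa [Finset.sum_apply] using this
    show (A.mulVecLin x) i = ∑ l : Fin a, α i l * (A.mulVecLin x) (Fin.castLE ha l)
    simp only [Matrix.mulVecLin_apply, Matrix.mulVec, dotProduct]
    calc ∑ k, A i k * x k
        = ∑ k, (∑ l : Fin a, α i l * A (Fin.castLE ha l) k) * x k := by
          exact Finset.sum_congr rfl fun k _ => by rw [hrow k]
      _ = ∑ l : Fin a, α i l * ∑ k, A (Fin.castLE ha l) k * x k := by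
          simp only [Finset.sum_mul, Finset.mul_sum, mul_assoc]
          exact Finset.sum_comm
  have hfin : Module.finrank ℂ S ≤ a := by
    have hinj : Function.Injective ((LinearMap.funLeft ℂ ℂ (Fin.castLE ha)).comp S.subtype) := by
      rw [← LinearMap.ker_eq_bot, LinearMap.ker_eq_bot']
      intro w hw0
      have h0 : ∀ l : Fin a, (w : Fin m → ℂ) (Fin.castLE ha l) = 0 := fun l => congrFun hw0 l
      ext i
      by_cases h : (i : ℕ) < a
      · have hi : i = Fin.castLE ha ⟨(i : ℕ), h⟩ := by ext; rfl
        rw [hi]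
        exact h0 _
      · push_neg at h
        have := w.2 i h
        simpa [h0] using this
    have := LinearMap.finrank_le_finrank_of_injective hinj
    simpa using this
  have heq : LinearMap.range A.mulVecLin = S := by
    apply Submodule.eq_of_le_of_finrank_le hle
    have : Module.finrank ℂ (LinearMap.range A.mulVecLin) = a := hrank
    rw [this]
    exact hfin
  have hvS : v ∈ S := hv
  rw [← heq] at hvS
  obtain ⟨x, hx⟩ := hvS
  exact ⟨x, hx⟩

open Finset Matrix in
/-- The consistency condition `A A⁽¹⁾ C B⁽¹⁾ B = C` holds for every choice of
`{1}`-inverses iff the rows of `C` below the first `a` and the columns of `C`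
beyond the first `b` satisfy the same dependence relations as those of `A`
and `B` respectively. -/
theorem consistency_condition_all_one_inverses {m n p q a b : ℕ}
    (ha : a ≤ m) (hb : b ≤ q)
    (A : Matrix (Fin m) (Fin n) ℂ) (B : Matrix (Fin p) (Fin q) ℂ)
    (C : Matrix (Fin m) (Fin q) ℂ)
    (hrankA : A.rank = a) (hrankB : B.rank = b)
    (hindA : LinearIndependent ℂ (fun l : Fin a => A (Fin.castLE ha l)))
    (hindB : LinearIndependent ℂ (fun k : Fin b => Bᵀ (Fin.castLE hb k)))
    (α : Fin m → Fin a → ℂ) (β : Fin b → Fin q → ℂ)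
    (hα : ∀ i : Fin m, a ≤ (i : ℕ) →
      A i = ∑ l : Fin a, α i l • A (Fin.castLE ha l))
    (hβ : ∀ j : Fin q, b ≤ (j : ℕ) →
      Bᵀ j = ∑ k : Fin b, β k j • Bᵀ (Fin.castLE hb k)) :
    (∀ (A1 : Matrix (Fin n) (Fin m) ℂ) (B1 : Matrix (Fin q) (Fin p) ℂ),
        A * A1 * A = A → B * B1 * B = B → A * A1 * C * B1 * B = C) ↔
      ((∀ i : Fin m, a ≤ (i : ℕ) → ∀ j : Fin q,
          C i j = ∑ l : Fin a, α i l * C (Fin.castLE ha l) j) ∧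
        (∀ j : Fin q, b ≤ (j : ℕ) → ∀ i : Fin m,
          C i j = ∑ k : Fin b, β k j * C i (Fin.castLE hb k))) := by
  constructor
  · intro H
    obtain ⟨A1, hA1⟩ := exists_one_inverse A
    obtain ⟨B1, hB1⟩ := exists_one_inverse B
    have hC := H A1 B1 hA1 hB1
    constructor
    · intro i hi j
      set X := A1 * C * B1 * B with hX
      have hC2 : A * X = C := by
        rw [hX]
        simp only [← Matrix.mul_assoc]
        exact hC
      have entry : ∀ i' j', C i' j' = ∑ k, A i' k * X k j' := fun i' j' => by
        rw [← congrFun (congrFun hC2 i') j', Matrix.mul_apply]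
      have hrow : ∀ k, A i k = ∑ l : Fin a, α i l * A (Fin.castLE ha l) k := by
        intro k
        have := congrFun (hα i hi) k
        simpa [Finset.sum_apply] using this
      calc C i j = ∑ k, A i k * X k j := entry i j
        _ = ∑ k, (∑ l : Fin a, α i l * A (Fin.castLE ha l) k) * X k j := by
            exact Finset.sum_congr rfl fun k _ => by rw [hrow k]
        _ = ∑ l : Fin a, α i l * ∑ k, A (Fin.castLE ha l) k * X k j := by
            simp only [Finset.sum_mul, Finset.mul_sum, mul_assoc]
            exact Finset.sum_comm
        _ = ∑ l : Fin a, α i l * C (Fin.castLE ha l) j := by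
            exact Finset.sum_congr rfl fun l _ => by rw [← entry]
    · intro j hj i
      set Y := A * A1 * C * B1 with hY
      have hC2 : Y * B = C := hC
      have entry : ∀ i' j', C i' j' = ∑ k, Y i' k * B k j' := fun i' j' => by
        rw [← congrFun (congrFun hC2 i') j', Matrix.mul_apply]
      have hcol : ∀ k', B k' j = ∑ k : Fin b, β k j * B k' (Fin.castLE hb k) := by
        intro k'
        have := congrFun (hβ j hj) k'
        simpa [Finset.sum_apply, Matrix.transpose_apply] using this
      calc C i j = ∑ k', Y i k' * B k' j := entry i j
        _ = ∑ k', Y i k' * ∑ k : Fin b, β k j * B k' (Fin.castLE hb k) := by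
            exact Finset.sum_congr rfl fun k' _ => by rw [hcol k']
        _ = ∑ k : Fin b, β k j * ∑ k', Y i k' * B k' (Fin.castLE hb k) := by
            simp only [Finset.mul_sum, mul_left_comm]
            exact Finset.sum_comm
        _ = ∑ k : Fin b, β k j * C i (Fin.castLE hb k) := by
            exact Finset.sum_congr rfl fun k _ => by rw [← entry]
  · rintro ⟨h1, h2⟩ A1 B1 hA1 hB1
    -- columns of C lie in the column space of A
    have hcol : ∀ j : Fin q, ∃ x : Fin n → ℂ, A.mulVec x = fun i => C i j := fun j =>
      mem_range_of_relations ha A hrankA α hα _ (fun i hi => h1 i hi j)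
    choose x hx using hcol
    set X : Matrix (Fin n) (Fin q) ℂ := Matrix.of fun k j => x j k with hXdef
    have hAX : A * X = C := by
      ext i j
      rw [Matrix.mul_apply]
      have := congrFun (hx j) i
      simpa [Matrix.mulVec, dotProduct, hXdef] using this
    -- rows of C lie in the row space of B
    have hrankBT : Bᵀ.rank = b := by rw [Matrix.rank_transpose]; exact hrankB
    have hrow : ∀ i : Fin m, ∃ z : Fin p → ℂ, Bᵀ.mulVec z = C i := fun i =>
      mem_range_of_relations hb Bᵀ hrankBT (fun j k => β k j) hβ (C i)
        (fun j hj => h2 j hj i)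
    choose z hz using hrow
    set Z : Matrix (Fin m) (Fin p) ℂ := Matrix.of fun i k => z i k with hZdef
    have hZB : Z * B = C := by
      ext i j
      rw [Matrix.mul_apply]
      have := congrFun (hz i) j
      simp only [Matrix.mulVec, dotProduct, Matrix.transpose_apply] at this
      rw [← this]
      exact Finset.sum_congr rfl fun k _ => mul_comm _ _
    have hAC : A * A1 * C = C := by
      rw [← hAX, ← Matrix.mul_assoc, hA1]
    have hCB : C * B1 * B = C := by
      conv_lhs => rw [← hZB]
      rw [Matrix.mul_assoc, Matrix.mul_assoc, ← Matrix.mul_assoc B B1 B, hB1]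
      exact hZB
    rw [hAC, hCB]
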